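/- Let T = {T_t}_{t∈ℝ} and S = {S_t}_{t∈ℝ} be measurable measure-preserving flows on standard probability Borel spaces (X, μ) and (Y, ν) respectively, and suppose T and S are spectrally isomorphic, i.e., there is a unitary operator U : L²(Y, ν) → L²(X, μ) with U∘U^S_t = U^T_t∘U for all t ∈ ℝ, where U^T_t f = f∘T_t and U^S_t g = g∘S_t are the Koopman operators. If T is partially rigid along a sequence t_n → ∞ with rigidity constant a satisfying 1/2 < a ≤ 1, then S is partially rigid along the same sequence {t_n}, with rigidity constant 2a − 1. -/

import Mathlib

open MeasureTheory Filter
open scoped ENNReal RealInnerProductSpace symmDiff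

/-- The constant function `1` as an element of `L²(μ)`. -/
noncomputable def lpOne {X : Type*} [MeasurableSpace X] (μ : Measure X)
    [IsProbabilityMeasure μ] : Lp ℝ 2 μ := Lp.const 2 μ (1 : ℝ)

/-- A Markov operator on `L²(μ)`: a bounded operator `V` with `V f ≥ 0` whenever
`f ≥ 0`, `V 1 = 1` and `V* 1 = 1`. -/
def IsMarkovOp {X : Type*} [MeasurableSpace X] (μ : Measure X) [IsProbabilityMeasure μ]
    (V : Lp ℝ 2 μ →L[ℝ] Lp ℝ 2 μ) : Prop :=
  (∀ f : Lp ℝ 2 μ, 0 ≤ f → 0 ≤ V f) ∧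
  V (lpOne μ) = lpOne μ ∧
  ContinuousLinearMap.adjoint V (lpOne μ) = lpOne μ

/-- `Φ` belongs to the closure of `S` in the weak operator topology on
bounded operators of `L²(μ)`. -/
def InWOTClosure {X : Type*} [MeasurableSpace X] (μ : Measure X)
    (S : Set (Lp ℝ 2 μ →L[ℝ] Lp ℝ 2 μ)) (Φ : Lp ℝ 2 μ →L[ℝ] Lp ℝ 2 μ) : Prop :=
  ContinuousLinearMapWOT.ofCLM Φ ∈
    closure (ContinuousLinearMapWOT.ofCLM '' S)

/-- The flow `{T_t}` is partially rigid along the sequence `{t_n}` with rigidity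
constant `u`: `liminf_n μ(A ∩ T_{-t_n} A) ≥ u · μ(A)` for every measurable `A`. -/
def PartiallyRigidAlongWith {X : Type*} [MeasurableSpace X] (μ : Measure X)
    (T : ℝ → X → X) (t : ℕ → ℝ) (u : ℝ) : Prop :=
  ∀ A : Set X, MeasurableSet A →
    ENNReal.ofReal u * μ A ≤ Filter.liminf (fun n => μ (A ∩ T (t n) ⁻¹' A)) Filter.atTop

/-- The flow `{T_t}` is partially rigid along the sequence `{t_n}`. -/
def PartiallyRigidAlong {X : Type*} [MeasurableSpace X] (μ : Measure X)
    (T : ℝ → X → X) (t : ℕ → ℝ) : Prop :=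
  ∃ u : ℝ, 0 < u ∧ u ≤ 1 ∧ PartiallyRigidAlongWith μ T t u


set_option linter.unusedSectionVars false
set_option linter.unusedVariables false
set_option maxHeartbeats 1000000

section AuxPartialRigidity

variable {Z : Type*} [MeasurableSpace Z] {ρ : Measure Z} [IsProbabilityMeasure ρ]

lemma aux_inner_integral {R : Z → Z} (hR : MeasurePreserving R ρ ρ)
    {V : Lp ℝ 2 ρ →L[ℝ] Lp ℝ 2 ρ}
    (hV : ∀ f : Lp ℝ 2 ρ, (V f : Z → ℝ) =ᵐ[ρ] fun z => (f : Z → ℝ) (R z)) (f g : Lp ℝ 2 ρ) :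
    ⟪V f, g⟫ = ∫ z, (f : Z → ℝ) (R z) * (g : Z → ℝ) z ∂ρ := by
  rw [MeasureTheory.L2.inner_def]
  refine integral_congr_ae ?_
  filter_upwards [hV f] with z hz
  simp [hz, RCLike.inner_apply]
  ring

lemma aux_inner_ind {R : Z → Z} (hR : MeasurePreserving R ρ ρ)
    {V : Lp ℝ 2 ρ →L[ℝ] Lp ℝ 2 ρ}
    (hV : ∀ f : Lp ℝ 2 ρ, (V f : Z → ℝ) =ᵐ[ρ] fun z => (f : Z → ℝ) (R z))
    {A B : Set Z} (hA : MeasurableSet A) (hB : MeasurableSet B) :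
    ⟪V (indicatorConstLp 2 hA (measure_ne_top ρ A) (1 : ℝ)),
      indicatorConstLp 2 hB (measure_ne_top ρ B) (1 : ℝ)⟫ = (ρ (R ⁻¹' A ∩ B)).toReal := by
  rw [aux_inner_integral hR hV]
  have h1 := indicatorConstLp_coeFn (p := 2) (μ := ρ) (hs := hA) (hμs := measure_ne_top ρ A) (c := (1:ℝ))
  have h2 := indicatorConstLp_coeFn (p := 2) (μ := ρ) (hs := hB) (hμs := measure_ne_top ρ B) (c := (1:ℝ))
  have h1' : (fun z => (indicatorConstLp 2 hA (measure_ne_top ρ A) (1:ℝ) : Z → ℝ) (R z))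
      =ᵐ[ρ] fun z => A.indicator (fun _ => (1:ℝ)) (R z) :=
    hR.quasiMeasurePreserving.tendsto_ae.eventually h1
  have : (fun z => (indicatorConstLp 2 hA (measure_ne_top ρ A) (1:ℝ) : Z → ℝ) (R z) *
      (indicatorConstLp 2 hB (measure_ne_top ρ B) (1:ℝ) : Z → ℝ) z)
      =ᵐ[ρ] (R ⁻¹' A ∩ B).indicator (fun _ => (1:ℝ)) := by
    filter_upwards [h1', h2] with z hz1 hz2
    rw [hz1, hz2]
    by_cases hzA : R z ∈ A <;> by_cases hzB : z ∈ B <;>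
      simp [Set.indicator_of_mem, Set.indicator_of_notMem, hzA, hzB, Set.mem_inter_iff]
  rw [integral_congr_ae this]
  simpa [Measure.real] using integral_indicator_const (1:ℝ) ((hA.preimage hR.measurable).inter hB)


lemma aux_inner_self (f : Lp ℝ 2 ρ) : ⟪f, f⟫ = ∫ z, (f : Z → ℝ) z * (f : Z → ℝ) z ∂ρ := by
  rw [MeasureTheory.L2.inner_def]
  refine integral_congr_ae (Eventually.of_forall fun z => ?_)
  simp [RCLike.inner_apply]
  ring

lemma aux_norm_V {R : Z → Z} (hR : MeasurePreserving R ρ ρ)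
    {V : Lp ℝ 2 ρ →L[ℝ] Lp ℝ 2 ρ}
    (hV : ∀ f : Lp ℝ 2 ρ, (V f : Z → ℝ) =ᵐ[ρ] fun z => (f : Z → ℝ) (R z)) (f : Lp ℝ 2 ρ) :
    ‖V f‖ = ‖f‖ := by
  have h1 : ⟪V f, V f⟫ = ∫ z, (f : Z → ℝ) (R z) * (f : Z → ℝ) (R z) ∂ρ := by
    rw [MeasureTheory.L2.inner_def]
    refine integral_congr_ae ?_
    filter_upwards [hV f] with z hz
    simp [hz, RCLike.inner_apply]
    ring
  have h2 : ∫ z, (f : Z → ℝ) (R z) * (f : Z → ℝ) (R z) ∂ρ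
      = ∫ z, (f : Z → ℝ) z * (f : Z → ℝ) z ∂ρ := by
    have hm : AEStronglyMeasurable (fun z => (f : Z → ℝ) z * (f : Z → ℝ) z) (Measure.map R ρ) := by
      rw [hR.map_eq]
      exact (Lp.aestronglyMeasurable f).mul (Lp.aestronglyMeasurable f)
    have := integral_map hR.aemeasurable hm
    rw [hR.map_eq] at this
    exact this.symm
  have h3 : ‖V f‖ ^ 2 = ‖f‖ ^ 2 := by
    rw [← real_inner_self_eq_norm_sq, ← real_inner_self_eq_norm_sq, h1, h2, aux_inner_self]
  calc ‖V f‖ = Real.sqrt (‖V f‖ ^ 2) := (Real.sqrt_sq (norm_nonneg _)).symm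
    _ = Real.sqrt (‖f‖ ^ 2) := by rw [h3]
    _ = ‖f‖ := Real.sqrt_sq (norm_nonneg _)

lemma aux_inner_nonneg {R : Z → Z} (hR : MeasurePreserving R ρ ρ)
    {V : Lp ℝ 2 ρ →L[ℝ] Lp ℝ 2 ρ}
    (hV : ∀ f : Lp ℝ 2 ρ, (V f : Z → ℝ) =ᵐ[ρ] fun z => (f : Z → ℝ) (R z))
    {f g : Lp ℝ 2 ρ} (hf : 0 ≤ᵐ[ρ] (f : Z → ℝ)) (hg : 0 ≤ᵐ[ρ] (g : Z → ℝ)) :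
    0 ≤ ⟪V f, g⟫ := by
  rw [aux_inner_integral hR hV]
  have hf' : 0 ≤ᵐ[ρ] fun z => (f : Z → ℝ) (R z) :=
    hR.quasiMeasurePreserving.tendsto_ae.eventually hf
  refine integral_nonneg_of_ae ?_
  filter_upwards [hf', hg] with z h1 h2
  exact mul_nonneg h1 h2
variable {Z : Type*} [MeasurableSpace Z] {ρ : Measure Z} [IsProbabilityMeasure ρ]

lemma coeFn_finset_sum {ι : Type*} (s : Finset ι) (F : ι → Lp ℝ 2 ρ) :
    ((∑ i ∈ s, F i : Lp ℝ 2 ρ) : Z → ℝ) =ᵐ[ρ] fun z => ∑ i ∈ s, (F i : Z → ℝ) z := by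
  classical
  induction s using Finset.induction_on with
  | empty => simp only [Finset.sum_empty]; exact Lp.coeFn_zero ℝ 2 ρ
  | insert j s' h ih =>
    rw [Finset.sum_insert h]
    refine (Lp.coeFn_add _ _).trans ?_
    filter_upwards [ih] with z hz
    simp only [Pi.add_apply, hz, Finset.sum_insert h]

lemma aux_expand (r : Finset ℝ) (I : ℝ → Lp ℝ 2 ρ) (V : Lp ℝ 2 ρ →L[ℝ] Lp ℝ 2 ρ) :
    ⟪V (∑ d ∈ r, d • I d), ∑ d ∈ r, d • I d⟫
      = ∑ d ∈ r, ∑ e ∈ r, d * e * ⟪V (I d), I e⟫ := by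
  rw [map_sum, sum_inner]
  refine Finset.sum_congr rfl fun d _ => ?_
  rw [_root_.map_smul, inner_sum]
  refine Finset.sum_congr rfl fun e _ => ?_
  rw [real_inner_smul_left, real_inner_smul_right]
  ring

lemma key_ind {R : ℕ → Z → Z} (hR : ∀ n, MeasurePreserving (R n) ρ ρ)
    {V : ℕ → (Lp ℝ 2 ρ →L[ℝ] Lp ℝ 2 ρ)}
    (hV : ∀ (n : ℕ) (f : Lp ℝ 2 ρ), (V n f : Z → ℝ) =ᵐ[ρ] fun z => (f : Z → ℝ) (R n z))
    {a : ℝ} (ha : 0 ≤ a)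
    (hind : ∀ A : Set Z, MeasurableSet A →
      ENNReal.ofReal a * ρ A ≤ liminf (fun n => ρ (A ∩ (R n) ⁻¹' A)) atTop)
    {A : Set Z} (hA : MeasurableSet A) {c : ℝ} (hc : c < a * (ρ A).toReal) :
    ∀ᶠ n in atTop, c < ⟪V n (indicatorConstLp 2 hA (measure_ne_top ρ A) (1 : ℝ)),
      indicatorConstLp 2 hA (measure_ne_top ρ A) (1 : ℝ)⟫ := by
  rcases lt_or_ge c 0 with h0 | h0
  · refine Eventually.of_forall fun n => ?_
    rw [aux_inner_ind (hR n) (hV n)]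
    exact lt_of_lt_of_le h0 ENNReal.toReal_nonneg
  · have hmul : ENNReal.ofReal a * ρ A = ENNReal.ofReal (a * (ρ A).toReal) := by
      rw [ENNReal.ofReal_mul ha, ENNReal.ofReal_toReal (measure_ne_top ρ A)]
    have hb : ENNReal.ofReal c < ENNReal.ofReal a * ρ A := by
      rw [hmul]
      exact (ENNReal.ofReal_lt_ofReal_iff (lt_of_le_of_lt h0 hc)).mpr hc
    have hev := eventually_lt_of_lt_liminf (lt_of_lt_of_le hb (hind A hA))
    filter_upwards [hev] with n hn
    rw [aux_inner_ind (hR n) (hV n), Set.inter_comm]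
    have h1 : (ENNReal.ofReal c).toReal < (ρ (A ∩ R n ⁻¹' A)).toReal :=
      (ENNReal.toReal_lt_toReal ENNReal.ofReal_ne_top (measure_ne_top _ _)).mpr hn
    rwa [ENNReal.toReal_ofReal h0] at h1

lemma key_nonneg {R : ℕ → Z → Z} (hR : ∀ n, MeasurePreserving (R n) ρ ρ)
    {V : ℕ → (Lp ℝ 2 ρ →L[ℝ] Lp ℝ 2 ρ)}
    (hV : ∀ (n : ℕ) (f : Lp ℝ 2 ρ), (V n f : Z → ℝ) =ᵐ[ρ] fun z => (f : Z → ℝ) (R n z))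
    {a : ℝ} (ha : 0 ≤ a)
    (hind : ∀ A : Set Z, MeasurableSet A →
      ENNReal.ofReal a * ρ A ≤ liminf (fun n => ρ (A ∩ (R n) ⁻¹' A)) atTop)
    (f : Lp ℝ 2 ρ) (hf : 0 ≤ᵐ[ρ] (f : Z → ℝ))
    {c : ℝ} (hc : c < a * ‖f‖ ^ 2) :
    ∀ᶠ n in atTop, c < ⟪V n f, f⟫ := by
  classical
  set M := ‖f‖ with hM
  have hM0 : 0 ≤ M := norm_nonneg f
  set ε := a * M ^ 2 - c with hε
  have hε0 : 0 < ε := by simp only [hε]; linarith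
  set D := 4 * (a + 1) * (M + 1) ^ 2 + 1 with hD
  have hD0 : 0 < D := by positivity
  set δ := min 1 (ε / D) with hδ
  have hδ0 : 0 < δ := lt_min one_pos (by positivity)
  have hδ1 : δ ≤ 1 := min_le_left _ _
  have hδD : δ ≤ ε / D := min_le_right _ _
  -- simple function approximation
  obtain ⟨g, hg, -⟩ := (Lp.memLp f).exists_simpleFunc_eLpNorm_sub_lt
    (by norm_num : (2 : ℝ≥0∞) ≠ ∞) (ENNReal.ofReal_pos.mpr hδ0).ne'
  set g' : SimpleFunc Z ℝ := g.map fun r => max r 0 with hg'def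
  have hg'app : ∀ z, g' z = max (g z) 0 := fun z => rfl
  have hg'nonneg : ∀ z, 0 ≤ g' z := fun z => le_max_right _ _
  have hg' : eLpNorm ((f : Z → ℝ) - ⇑g') 2 ρ < ENNReal.ofReal δ := by
    refine lt_of_le_of_lt (eLpNorm_mono_ae ?_) hg
    filter_upwards [hf] with z hz
    have hz' : (0:ℝ) ≤ (f : Z → ℝ) z := hz
    simp only [Pi.sub_apply, Real.norm_eq_abs, hg'app]
    rcases le_total (g z) 0 with h | h
    · rw [max_eq_right h, abs_of_nonneg (by linarith [hz'] : (0:ℝ) ≤ (f : Z → ℝ) z - 0),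
        abs_of_nonneg (by linarith [hz'] : (0:ℝ) ≤ (f : Z → ℝ) z - g z)]
      linarith
    · rw [max_eq_left h]
  -- the Lp element built from the fibers of g'
  set r : Finset ℝ := g'.range with hr
  set I : ℝ → Lp ℝ 2 ρ := fun d =>
    indicatorConstLp 2 (g'.measurableSet_fiber d) (measure_ne_top ρ _) (1 : ℝ) with hI
  set G : Lp ℝ 2 ρ := ∑ d ∈ r, d • I d with hG
  have hGcoe : (G : Z → ℝ) =ᵐ[ρ] ⇑g' := by
    have h1 : (G : Z → ℝ) =ᵐ[ρ] fun z => ∑ d ∈ r, ((d • I d : Lp ℝ 2 ρ) : Z → ℝ) z :=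
      coeFn_finset_sum r _
    have h2 : ∀ d ∈ r, ((d • I d : Lp ℝ 2 ρ) : Z → ℝ)
        =ᵐ[ρ] fun z => d * (g' ⁻¹' {d}).indicator (fun _ => (1:ℝ)) z := by
      intro d _
      filter_upwards [Lp.coeFn_smul d (I d), indicatorConstLp_coeFn (p := 2) (μ := ρ)
        (hs := g'.measurableSet_fiber d) (hμs := measure_ne_top ρ _) (c := (1:ℝ))] with z hz1 hz2
      rw [hz1]
      simp [hI, hz2]
    have h3 : ∀ᵐ z ∂ρ, ∀ d ∈ r, ((d • I d : Lp ℝ 2 ρ) : Z → ℝ) z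
        = d * (g' ⁻¹' {d}).indicator (fun _ => (1:ℝ)) z := by
      exact (Filter.eventually_all_finset r).mpr h2
    filter_upwards [h1, h3] with z hz1 hz3
    rw [hz1, Finset.sum_congr rfl hz3]
    rw [Finset.sum_eq_single_of_mem (g' z) (g'.mem_range_self z)]
    · simp [Set.indicator_of_mem, Set.mem_preimage]
    · intro d _ hd
      rw [Set.indicator_of_notMem, mul_zero]
      simp only [Set.mem_preimage, Set.mem_singleton_iff]
      exact fun h => hd h.symm
  -- norm bounds
  have hfG : ‖f - G‖ < δ := by
    rw [Lp.norm_def]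
    have hcongr : eLpNorm (⇑(f - G)) 2 ρ = eLpNorm ((f : Z → ℝ) - ⇑g') 2 ρ := by
      refine eLpNorm_congr_ae ?_
      filter_upwards [Lp.coeFn_sub f G, hGcoe] with z hz1 hz2
      simp only [hz1, Pi.sub_apply, hz2]
    rw [hcongr]
    exact ENNReal.toReal_lt_of_lt_ofReal hg'
  have hfG0 : 0 ≤ ‖f - G‖ := norm_nonneg _
  have hGnorm : ‖G‖ ≤ M + δ := by
    have h4 : G = f - (f - G) := by abel
    have h5 : ‖f - (f - G)‖ ≤ ‖f‖ + ‖f - G‖ := norm_sub_le _ _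
    rw [h4]
    linarith
  have hGge : M - δ ≤ ‖G‖ := by
    have := norm_sub_norm_le f G
    linarith [le_of_lt hfG, this]
  -- the inner products of indicators
  have hq : ∀ (n : ℕ) (d e : ℝ), ⟪V n (I d), I e⟫
      = (ρ (R n ⁻¹' (g' ⁻¹' {d}) ∩ g' ⁻¹' {e})).toReal := fun n d e =>
    aux_inner_ind (hR n) (hV n) (g'.measurableSet_fiber d) (g'.measurableSet_fiber e)
  have hqnonneg : ∀ (n : ℕ) (d e : ℝ), 0 ≤ ⟪V n (I d), I e⟫ := by
    intro n d e; rw [hq]; exact ENNReal.toReal_nonneg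
  have hrnonneg : ∀ d ∈ r, (0:ℝ) ≤ d := by
    intro d hd
    obtain ⟨z, hz⟩ := SimpleFunc.mem_range.mp hd
    rw [← hz]; exact hg'nonneg z
  -- identity-operator inner products: norm of G
  have hid : ∀ (h₁ h₂ : Lp ℝ 2 ρ), ⟪(ContinuousLinearMap.id ℝ (Lp ℝ 2 ρ)) h₁, h₂⟫ = ⟪h₁, h₂⟫ :=
    fun _ _ => rfl
  have hidmp : MeasurePreserving (fun z : Z => z) ρ ρ := MeasurePreserving.id ρ
  have hidV : ∀ h₁ : Lp ℝ 2 ρ, ((ContinuousLinearMap.id ℝ (Lp ℝ 2 ρ)) h₁ : Z → ℝ)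
      =ᵐ[ρ] fun z => (h₁ : Z → ℝ) ((fun z : Z => z) z) := fun h₁ => Eventually.of_forall fun z => rfl
  have hGsq : ‖G‖ ^ 2 = ∑ d ∈ r, d ^ 2 * (ρ (g' ⁻¹' {d})).toReal := by
    rw [← real_inner_self_eq_norm_sq]
    have := aux_expand (ρ := ρ) r I (ContinuousLinearMap.id ℝ (Lp ℝ 2 ρ))
    rw [hid] at this
    rw [← hG] at this
    rw [this]
    refine Finset.sum_congr rfl fun d hd => ?_
    rw [Finset.sum_eq_single_of_mem d hd]
    · rw [aux_inner_ind hidmp hidV (g'.measurableSet_fiber d) (g'.measurableSet_fiber d)]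
      have : (fun z : Z => z) ⁻¹' (g' ⁻¹' {d}) ∩ g' ⁻¹' {d} = g' ⁻¹' {d} := by
        ext z; simp
      rw [this]; ring
    · intro e _ hed
      rw [aux_inner_ind hidmp hidV (g'.measurableSet_fiber d) (g'.measurableSet_fiber e)]
      have : (fun z : Z => z) ⁻¹' (g' ⁻¹' {d}) ∩ g' ⁻¹' {e} = ∅ := by
        ext z
        simp only [Set.mem_inter_iff, Set.mem_preimage, Set.mem_singleton_iff, Set.mem_empty_iff_false,
          iff_false, not_and]
        intro h1 h2; exact hed (h2 ▸ h1 ▸ rfl)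
      rw [this]
      simp
  -- diagonal lower bound for V n G
  have hdiag : ∀ n, ∑ d ∈ r, d ^ 2 * ⟪V n (I d), I d⟫ ≤ ⟪V n G, G⟫ := by
    intro n
    rw [hG, aux_expand]
    refine Finset.sum_le_sum fun d hd => ?_
    have : d ^ 2 * ⟪V n (I d), I d⟫ = d * d * ⟪V n (I d), I d⟫ := by ring
    rw [this]
    exact Finset.single_le_sum (f := fun e => d * e * ⟪V n (I d), I e⟫)
      (fun e he => mul_nonneg (mul_nonneg (hrnonneg d hd) (hrnonneg e he)) (hqnonneg n d e)) hd
  -- eventual diagonal bound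
  set ε' := (ε / 2) / (∑ d ∈ r, d ^ 2 + 1) with hε'
  have hsum_sq_nonneg : (0:ℝ) ≤ ∑ d ∈ r, d ^ 2 := Finset.sum_nonneg fun d _ => sq_nonneg d
  have hε'0 : 0 < ε' := by positivity
  have hev : ∀ᶠ n in atTop, ∀ d ∈ r,
      a * (ρ (g' ⁻¹' {d})).toReal - ε' < ⟪V n (I d), I d⟫ := by
    rw [eventually_all_finset]
    intro d hd
    exact key_ind hR hV ha hind (g'.measurableSet_fiber d) (by linarith)
  -- error bound
  have herr : ∀ n, ⟪V n G, G⟫ - (δ * M + (M + δ) * δ) ≤ ⟪V n f, f⟫ := by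
    intro n
    have hexp : ⟪V n f, f⟫ - ⟪V n G, G⟫ = ⟪V n (f - G), f⟫ + ⟪V n G, f - G⟫ := by
      rw [map_sub, inner_sub_left, inner_sub_right]
      ring
    have h1 : |⟪V n (f - G), f⟫| ≤ ‖f - G‖ * M := by
      refine le_trans (abs_real_inner_le_norm _ _) ?_
      rw [aux_norm_V (hR n) (hV n)]
    have h2 : |⟪V n G, f - G⟫| ≤ (M + δ) * ‖f - G‖ := by
      refine le_trans (abs_real_inner_le_norm _ _) ?_
      rw [aux_norm_V (hR n) (hV n)]
      exact mul_le_mul_of_nonneg_right hGnorm (norm_nonneg _)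
    have h3 : ‖f - G‖ * M ≤ δ * M := mul_le_mul_of_nonneg_right (le_of_lt hfG) hM0
    have h4 : (M + δ) * ‖f - G‖ ≤ (M + δ) * δ := by
      refine mul_le_mul_of_nonneg_left (le_of_lt hfG) (by linarith)
    have h5 := abs_le.mp h1
    have h6 := abs_le.mp h2
    linarith [hexp]
  -- conclusion
  filter_upwards [hev] with n hn
  have hdsum : ∑ d ∈ r, d ^ 2 * (a * (ρ (g' ⁻¹' {d})).toReal - ε')
      ≤ ∑ d ∈ r, d ^ 2 * ⟪V n (I d), I d⟫ := by
    refine Finset.sum_le_sum fun d hd => ?_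
    exact mul_le_mul_of_nonneg_left (le_of_lt (hn d hd)) (sq_nonneg d)
  have hsplit : ∑ d ∈ r, d ^ 2 * (a * (ρ (g' ⁻¹' {d})).toReal - ε')
      = a * (∑ d ∈ r, d ^ 2 * (ρ (g' ⁻¹' {d})).toReal) - ε' * ∑ d ∈ r, d ^ 2 := by
    rw [Finset.mul_sum, Finset.mul_sum, ← Finset.sum_sub_distrib]
    exact Finset.sum_congr rfl fun d _ => by ring
  have hε'sum : ε' * ∑ d ∈ r, d ^ 2 ≤ ε / 2 := by
    have h7 : ε' * (∑ d ∈ r, d ^ 2) ≤ ε' * (∑ d ∈ r, d ^ 2 + 1) :=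
      mul_le_mul_of_nonneg_left (by linarith) (le_of_lt hε'0)
    have h8 : ε' * (∑ d ∈ r, d ^ 2 + 1) = ε / 2 := by
      rw [hε']
      exact div_mul_cancel₀ _ (ne_of_gt (by linarith : (0:ℝ) < ∑ d ∈ r, d ^ 2 + 1))
    linarith
  have hGsq_ge : M ^ 2 - 2 * M * δ ≤ ‖G‖ ^ 2 := by
    rcases le_total M δ with h | h
    · nlinarith [norm_nonneg G, sq_nonneg ‖G‖, mul_le_mul_of_nonneg_left h hM0]
    · have h2 : (0:ℝ) ≤ M - δ := by linarith
      have h3 : (M - δ) * (M - δ) ≤ ‖G‖ * ‖G‖ := mul_le_mul hGge hGge h2 (norm_nonneg G)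
      nlinarith [h3, hδ0]
  have hδε : δ * M + (M + δ) * δ + 2 * a * M * δ < ε / 2 := by
    set XX := 2 * a * M + 2 * M + 1 with hXX
    have hXX0 : (0:ℝ) < XX := by have := mul_nonneg ha hM0; simp only [hXX]; linarith
    have h8 : δ * XX ≤ (ε / D) * XX := mul_le_mul_of_nonneg_right hδD (le_of_lt hXX0)
    have hkey : 2 * XX < D := by
      simp only [hXX, hD]
      nlinarith [mul_nonneg ha hM0, sq_nonneg M, mul_nonneg (mul_nonneg ha hM0) hM0, ha, hM0]
    have h9 : (ε / D) * XX < ε / 2 := by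
      rw [div_mul_eq_mul_div, div_lt_iff₀ hD0]
      nlinarith [mul_lt_mul_of_pos_left hkey (half_pos hε0)]
    have h10 : δ * δ ≤ δ * 1 := mul_le_mul_of_nonneg_left hδ1 (le_of_lt hδ0)
    have h11 : δ * M + (M + δ) * δ + 2 * a * M * δ ≤ δ * XX := by
      simp only [hXX]; nlinarith [h10, hM0, hδ0]
    linarith
  calc c = a * M ^ 2 - ε := by rw [hε]; ring
    _ < a * (M ^ 2 - 2 * M * δ) - ε / 2 - (δ * M + (M + δ) * δ) := by nlinarith [hδε, ha, hδ0, hM0]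
    _ ≤ a * ‖G‖ ^ 2 - ε / 2 - (δ * M + (M + δ) * δ) := by nlinarith [hGsq_ge, ha]
    _ = a * (∑ d ∈ r, d ^ 2 * (ρ (g' ⁻¹' {d})).toReal) - ε / 2 - (δ * M + (M + δ) * δ) := by
        rw [hGsq]
    _ ≤ ∑ d ∈ r, d ^ 2 * (a * (ρ (g' ⁻¹' {d})).toReal - ε') - (δ * M + (M + δ) * δ) := by
        rw [hsplit]; linarith [hε'sum]
    _ ≤ ∑ d ∈ r, d ^ 2 * ⟪V n (I d), I d⟫ - (δ * M + (M + δ) * δ) := by linarith [hdsum]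
    _ ≤ ⟪V n G, G⟫ - (δ * M + (M + δ) * δ) := by linarith [hdiag n]
    _ ≤ ⟪V n f, f⟫ := herr n

lemma key_gen {R : ℕ → Z → Z} (hR : ∀ n, MeasurePreserving (R n) ρ ρ)
    {V : ℕ → (Lp ℝ 2 ρ →L[ℝ] Lp ℝ 2 ρ)}
    (hV : ∀ (n : ℕ) (f : Lp ℝ 2 ρ), (V n f : Z → ℝ) =ᵐ[ρ] fun z => (f : Z → ℝ) (R n z))
    {a : ℝ} (ha : 0 ≤ a)
    (hind : ∀ A : Set Z, MeasurableSet A →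
      ENNReal.ofReal a * ρ A ≤ liminf (fun n => ρ (A ∩ (R n) ⁻¹' A)) atTop)
    (f : Lp ℝ 2 ρ) {c : ℝ} (hc : c < (2 * a - 1) * ‖f‖ ^ 2) :
    ∀ᶠ n in atTop, c < ⟪V n f, f⟫ := by
  set p := Lp.posPart f with hp
  set q := Lp.negPart f with hq
  have hp0 : 0 ≤ᵐ[ρ] (p : Z → ℝ) := by
    filter_upwards [Lp.coeFn_posPart f] with z h
    rw [h]; exact le_max_right _ _
  have hq0 : 0 ≤ᵐ[ρ] (q : Z → ℝ) := by
    filter_upwards [Lp.coeFn_negPart_eq_max f] with z h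
    rw [h]; exact le_max_right _ _
  have hsub : p - q = f := by
    refine Lp.ext ?_
    filter_upwards [Lp.coeFn_sub p q, Lp.coeFn_posPart f, Lp.coeFn_negPart_eq_max f] with z h1 h2 h3
    rw [h1, Pi.sub_apply, h2, h3]
    rcases le_total ((f : Z → ℝ) z) 0 with h | h
    · rw [max_eq_right h, max_eq_left (by linarith)]; ring
    · rw [max_eq_left h, max_eq_right (by linarith)]; ring
  have hpq : ⟪p, q⟫ = 0 := by
    rw [MeasureTheory.L2.inner_def]
    have : (fun z => ⟪(p : Z → ℝ) z, (q : Z → ℝ) z⟫) =ᵐ[ρ] fun _ => (0 : ℝ) := by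
      filter_upwards [Lp.coeFn_posPart f, Lp.coeFn_negPart_eq_max f] with z h1 h2
      simp only [RCLike.inner_apply, conj_trivial, hp, hq, h1, h2]
      rcases le_total ((f : Z → ℝ) z) 0 with h | h
      · rw [max_eq_right h]; ring
      · rw [max_eq_right (by linarith : -(f : Z → ℝ) z ≤ 0)]; ring
    rw [integral_congr_ae this, integral_zero]
  have hqp : ⟪q, p⟫ = 0 := by rw [real_inner_comm]; exact hpq
  have hnorm : ‖p‖ ^ 2 + ‖q‖ ^ 2 = ‖f‖ ^ 2 := by
    rw [← real_inner_self_eq_norm_sq, ← real_inner_self_eq_norm_sq, ← real_inner_self_eq_norm_sq,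
      ← hsub, inner_sub_left, inner_sub_right, inner_sub_right, hpq, hqp]
    ring
  have hnorm2 : ‖p + q‖ ^ 2 = ‖f‖ ^ 2 := by
    rw [← real_inner_self_eq_norm_sq, inner_add_left, inner_add_right, inner_add_right, hpq, hqp,
      real_inner_self_eq_norm_sq, real_inner_self_eq_norm_sq]
    linarith
  have hident : ∀ n, ⟪V n f, f⟫ = 2 * ⟪V n p, p⟫ + 2 * ⟪V n q, q⟫ - ⟪V n (p + q), p + q⟫ := by
    intro n
    rw [← hsub, map_sub, map_add, inner_sub_left, inner_sub_right, inner_sub_right,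
      inner_add_left, inner_add_right, inner_add_right]
    ring
  have hbound : ∀ n, ⟪V n (p + q), p + q⟫ ≤ ‖f‖ ^ 2 := by
    intro n
    refine le_trans (real_inner_le_norm _ _) ?_
    rw [aux_norm_V (hR n) (hV n), ← hnorm2]
    ring_nf
    exact le_refl _
  set ε := (2 * a - 1) * ‖f‖ ^ 2 - c with hε
  have hε0 : 0 < ε := by simp only [hε]; linarith
  have h1 := key_nonneg hR hV ha hind p hp0 (c := a * ‖p‖ ^ 2 - ε / 4) (by linarith)
  have h2 := key_nonneg hR hV ha hind q hq0 (c := a * ‖q‖ ^ 2 - ε / 4) (by linarith)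
  filter_upwards [h1, h2] with n hn1 hn2
  have := hbound n
  rw [hident n]
  nlinarith [hn1, hn2, hnorm, hε0]

end AuxPartialRigidity

/-- Proposition 6.11: if the flows `T` on `(X, μ)` and `S` on `(Y, ν)` are
spectrally isomorphic and `T` is partially rigid along `t_n → ∞` with rigidity constant
`1/2 < a ≤ 1`, then `S` is partially rigid along the same sequence with rigidity
constant `2a - 1`. -/
theorem stmt14 {X Y : Type*} [MeasurableSpace X] [StandardBorelSpace X]
    [MeasurableSpace Y] [StandardBorelSpace Y]
    (μ : Measure X) [IsProbabilityMeasure μ] (ν : Measure Y) [IsProbabilityMeasure ν]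
    (T : ℝ → X → X)
    (hT0 : ∀ x : X, T 0 x = x)
    (hTadd : ∀ s t : ℝ, ∀ x : X, T (s + t) x = T s (T t x))
    (hTmeas : Measurable (Function.uncurry T))
    (hTmp : ∀ t : ℝ, MeasurePreserving (T t) μ μ)
    (UT : ℝ → (Lp ℝ 2 μ →L[ℝ] Lp ℝ 2 μ))
    (hUT : ∀ (t : ℝ) (f : Lp ℝ 2 μ), (UT t f : X → ℝ) =ᵐ[μ] fun x => (f : X → ℝ) (T t x))
    (hUTcont : ∀ f g : Lp ℝ 2 μ, Continuous fun t : ℝ => ⟪UT t f, g⟫)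
    (S : ℝ → Y → Y)
    (hS0 : ∀ y : Y, S 0 y = y)
    (hSadd : ∀ s t : ℝ, ∀ y : Y, S (s + t) y = S s (S t y))
    (hSmeas : Measurable (Function.uncurry S))
    (hSmp : ∀ t : ℝ, MeasurePreserving (S t) ν ν)
    (US : ℝ → (Lp ℝ 2 ν →L[ℝ] Lp ℝ 2 ν))
    (hUS : ∀ (t : ℝ) (f : Lp ℝ 2 ν), (US t f : Y → ℝ) =ᵐ[ν] fun y => (f : Y → ℝ) (S t y))
    (hUScont : ∀ f g : Lp ℝ 2 ν, Continuous fun t : ℝ => ⟪US t f, g⟫)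
    (W : Lp ℝ 2 ν ≃ₗᵢ[ℝ] Lp ℝ 2 μ)
    (hW : ∀ (t : ℝ) (f : Lp ℝ 2 ν), W (US t f) = UT t (W f))
    (t : ℕ → ℝ) (ht : Tendsto t atTop atTop)
    (a : ℝ) (ha0 : 1 / 2 < a) (ha1 : a ≤ 1)
    (hpr : PartiallyRigidAlongWith μ T t a) :
    PartiallyRigidAlongWith ν S t (2 * a - 1) := by
  intro B hB
  have ha' : (0:ℝ) ≤ a := by linarith
  have h2a : (0:ℝ) ≤ 2 * a - 1 := by linarith
  set IB : Lp ℝ 2 ν := indicatorConstLp 2 hB (measure_ne_top ν B) (1:ℝ) with hIB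
  set h : Lp ℝ 2 μ := W IB with hh
  have hRmp : ∀ n : ℕ, MeasurePreserving (T (t n)) μ μ := fun n => hTmp (t n)
  have hVae : ∀ (n : ℕ) (f : Lp ℝ 2 μ),
      ((UT (t n)) f : X → ℝ) =ᵐ[μ] fun x => (f : X → ℝ) (T (t n) x) := fun n f => hUT (t n) f
  have hind : ∀ A : Set X, MeasurableSet A →
      ENNReal.ofReal a * μ A ≤ liminf (fun n => μ (A ∩ T (t n) ⁻¹' A)) atTop := hpr
  have hidmp : MeasurePreserving (fun z : Y => z) ν ν := MeasurePreserving.id ν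
  have hidV : ∀ h₁ : Lp ℝ 2 ν, ((ContinuousLinearMap.id ℝ (Lp ℝ 2 ν)) h₁ : Y → ℝ)
      =ᵐ[ν] fun z => (h₁ : Y → ℝ) ((fun z : Y => z) z) := fun h₁ => Eventually.of_forall fun z => rfl
  have hnormIB : ‖IB‖ ^ 2 = (ν B).toReal := by
    rw [← real_inner_self_eq_norm_sq, hIB]
    have h0 : ⟪(indicatorConstLp 2 hB (measure_ne_top ν B) (1:ℝ)),
        (indicatorConstLp 2 hB (measure_ne_top ν B) (1:ℝ))⟫
        = (ν ((fun z : Y => z) ⁻¹' B ∩ B)).toReal := aux_inner_ind hidmp hidV hB hB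
    have h1 : ((fun z : Y => z) ⁻¹' B ∩ B) = B := by ext z; simp
    rw [h0, h1]
  have hnormh : ‖h‖ ^ 2 = (ν B).toReal := by
    rw [hh, LinearIsometryEquiv.norm_map]; exact hnormIB
  have hseq : ∀ n : ℕ, ⟪UT (t n) h, h⟫ = (ν (B ∩ S (t n) ⁻¹' B)).toReal := by
    intro n
    rw [hh, ← hW (t n) IB, LinearIsometryEquiv.inner_map_map, hIB,
      aux_inner_ind (hSmp (t n)) (fun f => hUS (t n) f) hB hB, Set.inter_comm]
  refine (Filter.le_liminf_iff (by isBoundedDefault) (by isBoundedDefault)).mpr ?_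
  intro b hb
  have hbtop : b ≠ ⊤ := hb.ne_top
  have hX : ENNReal.ofReal (2 * a - 1) * ν B = ENNReal.ofReal ((2 * a - 1) * (ν B).toReal) := by
    rw [ENNReal.ofReal_mul h2a, ENNReal.ofReal_toReal (measure_ne_top ν B)]
  have hbr : b.toReal < (2 * a - 1) * (ν B).toReal := by
    rw [hX] at hb
    have h1 := (ENNReal.toReal_lt_toReal hbtop ENNReal.ofReal_ne_top).mpr hb
    rwa [ENNReal.toReal_ofReal (by positivity)] at h1
  have hc : b.toReal < (2 * a - 1) * ‖h‖ ^ 2 := by rw [hnormh]; exact hbr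
  have hev := key_gen (V := fun n => UT (t n)) hRmp hVae ha' hind h hc
  filter_upwards [hev] with n hn
  rw [hseq n] at hn
  exact (ENNReal.toReal_lt_toReal hbtop (measure_ne_top ν _)).mp hn
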